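/- arXiv:math/0610244 — 3 statements merged into one kernel-verified Lean document; each statement's English description precedes it below -/
import Mathlib

section
/- For α > 1, the kernel g_α(t) = t^(α-1)/Γ(α) is not completely positive on [0,T] for any T > 0. -/
open MeasureTheory intervalIntegral

noncomputable def gKer (α t : ℝ) : ℝ := t ^ (α - 1) / Real.Gamma α

def CompletelyPositiveOn (a : ℝ → ℝ) (T : ℝ) : Prop :=
  ∀ μ : ℝ, 0 ≤ μ →
    (∀ s : ℝ → ℝ, IntervalIntegrable s MeasureTheory.volume 0 T →
      (∀ t ∈ Set.Icc (0:ℝ) T, s t + μ * ∫ τ in (0:ℝ)..t, a (t - τ) * s τ = 1) →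
      ∀ t ∈ Set.Icc (0:ℝ) T, 0 ≤ s t) ∧
    (∀ r : ℝ → ℝ, IntervalIntegrable r MeasureTheory.volume 0 T →
      (∀ t ∈ Set.Icc (0:ℝ) T, r t + μ * ∫ τ in (0:ℝ)..t, a (t - τ) * r τ = a t) →
      ∀ t ∈ Set.Icc (0:ℝ) T, 0 ≤ r t)

noncomputable def mlE (α x : ℝ) : ℝ := ∑' n : ℕ, (-x) ^ n / Real.Gamma ((n : ℝ) * α + 1)

lemma gamma_arg_pos {α : ℝ} (hα : 1 < α) (n : ℕ) : 0 < (n : ℝ) * α + 1 := by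
  have h0 : (0:ℝ) ≤ (n:ℝ) := n.cast_nonneg
  nlinarith

lemma gamma_pos {α : ℝ} (hα : 1 < α) (n : ℕ) : 0 < Real.Gamma ((n : ℝ) * α + 1) :=
  Real.Gamma_pos_of_pos (gamma_arg_pos hα n)

lemma fact_le_gamma {α : ℝ} (hα : 1 < α) (n : ℕ) :
    (n.factorial : ℝ) ≤ Real.Gamma ((n : ℝ) * α + 1) := by
  rcases n with _ | m
  · simp [Real.Gamma_one]
  · have h2 : (2:ℝ) ≤ ((m+1 : ℕ):ℝ) + 1 := by push_cast; linarith [Nat.cast_nonneg (α := ℝ) m]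
    have hm : (0:ℝ) ≤ (m:ℝ) := m.cast_nonneg
    have h2' : (2:ℝ) ≤ ((m+1 : ℕ):ℝ) * α + 1 := by push_cast; nlinarith
    have hle : ((m+1 : ℕ):ℝ) + 1 ≤ ((m+1 : ℕ):ℝ) * α + 1 := by push_cast; nlinarith
    have := Real.Gamma_strictMonoOn_Ici.monotoneOn (by simpa using h2) (by simpa using h2') hle
    calc ((m+1).factorial : ℝ) = Real.Gamma (((m+1):ℕ) + 1) := (Real.Gamma_nat_eq_factorial (m+1)).symm
    _ ≤ Real.Gamma (((m+1):ℕ) * α + 1) := this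

lemma summable_E {α : ℝ} (hα : 1 < α) (x : ℝ) :
    Summable (fun n : ℕ => x ^ n / Real.Gamma ((n : ℝ) * α + 1)) := by
  apply Summable.of_norm_bounded (Real.summable_pow_div_factorial |x|)
  intro n
  have hg := gamma_pos hα n
  have hf : (0:ℝ) < (n.factorial : ℝ) := by positivity
  rw [norm_div, norm_pow, Real.norm_eq_abs, Real.norm_eq_abs, abs_of_pos hg]
  gcongr
  exact fact_le_gamma hα n

lemma hasSum_E {α : ℝ} (hα : 1 < α) (x : ℝ) :
    HasSum (fun n : ℕ => (-x) ^ n / Real.Gamma ((n : ℝ) * α + 1)) (mlE α x) :=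
  (summable_E hα (-x)).hasSum

lemma mlE_zero {α : ℝ} (hα : 1 < α) : mlE α 0 = 1 := by
  rw [mlE, tsum_eq_single 0]
  · simp [Real.Gamma_one]
  · intro n hn
    simp [zero_pow hn]

lemma real_beta {a b t : ℝ} (ha : 0 < a) (hb : 0 < b) (ht : 0 < t) :
    ∫ τ in (0:ℝ)..t, τ ^ (b - 1) * (t - τ) ^ (a - 1)
      = t ^ (a + b - 1) * (Real.Gamma a * Real.Gamma b / Real.Gamma (a + b)) := by
  have hcast : ∀ x : ℝ, 0 ≤ x → ∀ y : ℝ, ((x : ℂ) ^ ((y : ℂ)) : ℂ) = ((x ^ y : ℝ) : ℂ) :=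
    fun x hx y => (Complex.ofReal_cpow hx y).symm
  have key := Complex.betaIntegral_scaled (b : ℂ) (a : ℂ) ht
  have hG := Complex.Gamma_mul_Gamma_eq_betaIntegral
      (s := (b:ℂ)) (t := (a:ℂ)) (by simpa using hb) (by simpa using ha)
  -- rewrite the complex integral as coercion of the real one
  have hI : (∫ x in (0:ℝ)..t, (x : ℂ) ^ ((b:ℂ) - 1) * ((t:ℂ) - x) ^ ((a:ℂ) - 1))
      = ((∫ τ in (0:ℝ)..t, τ ^ (b - 1) * (t - τ) ^ (a - 1) : ℝ) : ℂ) := by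
    rw [← intervalIntegral.integral_ofReal]
    apply intervalIntegral.integral_congr
    intro x hx
    rw [Set.uIcc_of_le ht.le] at hx
    obtain ⟨hx0, hxt⟩ := hx
    show (x:ℂ) ^ ((b:ℂ) - 1) * ((t:ℂ) - x) ^ ((a:ℂ) - 1)
        = ((x ^ (b - 1) * (t - x) ^ (a - 1) : ℝ) : ℂ)
    have h1 : ((b:ℂ) - 1) = ((b - 1 : ℝ) : ℂ) := by push_cast; ring
    have h2 : ((a:ℂ) - 1) = ((a - 1 : ℝ) : ℂ) := by push_cast; ring
    have h3 : ((t:ℂ) - (x:ℂ)) = ((t - x : ℝ) : ℂ) := by push_cast; ring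
    rw [h1, h2, h3, hcast x hx0 (b-1), hcast (t-x) (by linarith) (a-1)]
    push_cast
    ring
  rw [hI] at key
  have hGab : Real.Gamma (a + b) ≠ 0 := (Real.Gamma_pos_of_pos (by linarith)).ne'
  have hbeta : Complex.betaIntegral (b:ℂ) (a:ℂ)
      = ((Real.Gamma a * Real.Gamma b / Real.Gamma (a + b) : ℝ) : ℂ) := by
    have h4 : ((b:ℂ) + (a:ℂ)) = ((a + b : ℝ) : ℂ) := by push_cast; ring
    rw [h4, Complex.Gamma_ofReal, Complex.Gamma_ofReal, Complex.Gamma_ofReal] at hG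
    have : ((Real.Gamma (a+b) : ℝ) : ℂ) ≠ 0 := by
      simpa using hGab
    rw [Complex.ofReal_div, Complex.ofReal_mul, eq_div_iff this]
    linear_combination -hG
  rw [hbeta] at key
  have h5 : ((b:ℂ) + (a:ℂ) - 1) = ((a + b - 1 : ℝ) : ℂ) := by push_cast; ring
  rw [h5, hcast t ht.le (a + b - 1)] at key
  have := key
  rw [← Complex.ofReal_mul] at this
  exact_mod_cast this

lemma cont_rpow {q : ℝ} (hq : 0 ≤ q) : Continuous fun x : ℝ => x ^ q :=
  continuous_iff_continuousAt.2 fun x => Real.continuousAt_rpow_const x q (Or.inr hq)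

lemma contOn_mlE_comp {α : ℝ} (hα : 1 < α) (μ B : ℝ) :
    ContinuousOn (fun τ : ℝ => mlE α (μ * τ ^ α)) (Set.Icc (0:ℝ) B) := by
  have hα0 : (0:ℝ) ≤ α := by linarith
  have hcf : ∀ n : ℕ, Continuous fun τ : ℝ => (-(μ * τ ^ α)) ^ n / Real.Gamma ((n:ℝ) * α + 1) :=
    fun n => (((continuous_const.mul (cont_rpow hα0)).neg.pow n)).div_const _
  have hu : Summable (fun n : ℕ => (|μ| * B ^ α) ^ n / Real.Gamma ((n:ℝ) * α + 1)) :=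
    summable_E hα _
  have hbd : ∀ (n : ℕ) (τ : ℝ), τ ∈ Set.Icc (0:ℝ) B →
      ‖(-(μ * τ ^ α)) ^ n / Real.Gamma ((n:ℝ) * α + 1)‖
        ≤ (|μ| * B ^ α) ^ n / Real.Gamma ((n:ℝ) * α + 1) := by
    intro n τ hτ
    have hg := gamma_pos hα n
    have hτα : (0:ℝ) ≤ τ ^ α := Real.rpow_nonneg hτ.1 α
    have hτB : τ ^ α ≤ B ^ α := Real.rpow_le_rpow hτ.1 hτ.2 hα0
    rw [norm_div, norm_pow, Real.norm_eq_abs, Real.norm_eq_abs, abs_of_pos hg, abs_neg, abs_mul,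
      abs_of_nonneg hτα]
    gcongr
  have := (tendstoUniformlyOn_tsum hu hbd).continuousOn
    (Filter.Frequently.of_forall fun s =>
      (continuous_finset_sum s fun n _ => hcf n).continuousOn)
  simpa only [mlE] using this

lemma J_formula {α : ℝ} (hα : 1 < α) {t : ℝ} (ht : 0 < t) (n : ℕ) :
    ∫ τ in (0:ℝ)..t, gKer α (t - τ) * τ ^ ((n:ℝ) * α)
      = t ^ (((n:ℝ) + 1) * α) * (Real.Gamma ((n:ℝ) * α + 1) / Real.Gamma (((n:ℝ) + 1) * α + 1)) := by
  have hb : 0 < (n:ℝ) * α + 1 := gamma_arg_pos hα n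
  have hΓα : Real.Gamma α ≠ 0 := (Real.Gamma_pos_of_pos (by linarith)).ne'
  have key := real_beta (a := α) (b := (n:ℝ) * α + 1) (by linarith) hb ht
  have hcongr : ∀ τ : ℝ, gKer α (t - τ) * τ ^ ((n:ℝ) * α)
      = (Real.Gamma α)⁻¹ * (τ ^ (((n:ℝ) * α + 1) - 1) * (t - τ) ^ (α - 1)) := by
    intro τ
    have : ((n:ℝ) * α + 1) - 1 = (n:ℝ) * α := by ring
    rw [this, gKer]
    ring
  rw [intervalIntegral.integral_congr (fun τ _ => hcongr τ),
    intervalIntegral.integral_const_mul, key]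
  have e1 : α + ((n:ℝ) * α + 1) - 1 = ((n:ℝ) + 1) * α := by ring
  have e2 : α + ((n:ℝ) * α + 1) = ((n:ℝ) + 1) * α + 1 := by ring
  rw [e1, e2]
  field_simp

lemma pow_rpow_eq {x : ℝ} (hx : 0 ≤ x) (α : ℝ) (n : ℕ) :
    (x ^ α) ^ n = x ^ ((n : ℝ) * α) := by
  have h : (n : ℝ) * α = α * ((n : ℕ) : ℝ) := by ring
  rw [h, Real.rpow_mul hx, Real.rpow_natCast]

lemma hasSum_repr {α : ℝ} (hα : 1 < α) (μ : ℝ) {τ : ℝ} (hτ : 0 ≤ τ) :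
    HasSum (fun n : ℕ => ((-μ) ^ n / Real.Gamma ((n:ℝ) * α + 1)) * τ ^ ((n:ℝ) * α))
      (mlE α (μ * τ ^ α)) := by
  have h : HasSum (fun n : ℕ => (-(μ * τ ^ α)) ^ n / Real.Gamma ((n:ℝ) * α + 1))
      (mlE α (μ * τ ^ α)) := (summable_E hα (-(μ * τ ^ α))).hasSum
  have heq : (fun n : ℕ => (-(μ * τ ^ α)) ^ n / Real.Gamma ((n:ℝ) * α + 1))
      = fun n : ℕ => ((-μ) ^ n / Real.Gamma ((n:ℝ) * α + 1)) * τ ^ ((n:ℝ) * α) := by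
    funext n
    rw [← pow_rpow_eq hτ α n, show -(μ * τ ^ α) = (-μ) * τ ^ α by ring, mul_pow]
    ring
  rw [heq] at h
  exact h

lemma resolvent_eq {α : ℝ} (hα : 1 < α) (μ : ℝ) {t : ℝ} (ht : 0 ≤ t) :
    mlE α (μ * t ^ α) + μ * ∫ τ in (0:ℝ)..t, gKer α (t - τ) * mlE α (μ * τ ^ α) = 1 := by
  rcases eq_or_lt_of_le ht with rfl | ht'
  · rw [intervalIntegral.integral_same]
    simp [Real.zero_rpow (show α ≠ 0 by linarith), mlE_zero hα]
  -- main case : 0 < t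
  have hα0 : (0:ℝ) ≤ α := by linarith
  have hα1 : (0:ℝ) ≤ α - 1 := by linarith
  have hΓα : 0 < Real.Gamma α := Real.Gamma_pos_of_pos (by linarith)
  -- the dominated-convergence interchange
  have hmain : HasSum
      (fun n : ℕ => ∫ τ in (0:ℝ)..t,
        gKer α (t - τ) * (((-μ) ^ n / Real.Gamma ((n:ℝ) * α + 1)) * τ ^ ((n:ℝ) * α)))
      (∫ τ in (0:ℝ)..t, gKer α (t - τ) * mlE α (μ * τ ^ α)) := by
    apply intervalIntegral.hasSum_integral_of_dominated_convergence
      (bound := fun (n : ℕ) (_ : ℝ) =>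
        (t ^ (α - 1) / Real.Gamma α) * ((|μ| * t ^ α) ^ n / Real.Gamma ((n:ℝ) * α + 1)))
    · intro n
      have hc : Continuous fun τ : ℝ =>
          gKer α (t - τ) * (((-μ) ^ n / Real.Gamma ((n:ℝ) * α + 1)) * τ ^ ((n:ℝ) * α)) := by
        have h1 : Continuous fun τ : ℝ => gKer α (t - τ) := by
          simp only [gKer]
          exact ((cont_rpow hα1).comp (continuous_const.sub continuous_id)).div_const _
        have h2 : Continuous fun τ : ℝ => τ ^ ((n:ℝ) * α) :=
          cont_rpow (by positivity)
        exact h1.mul (continuous_const.mul h2)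
      exact hc.aestronglyMeasurable
    · intro n
      refine Filter.Eventually.of_forall fun τ hτ => ?_
      rw [Set.uIoc_of_le ht'.le] at hτ
      have hτ0 : (0:ℝ) ≤ τ := hτ.1.le
      have hτt : τ ≤ t := hτ.2
      have htτ : (0:ℝ) ≤ t - τ := by linarith
      have hg := gamma_pos hα n
      have e1 : ‖gKer α (t - τ) * (((-μ) ^ n / Real.Gamma ((n:ℝ) * α + 1)) * τ ^ ((n:ℝ) * α))‖
          = ((t - τ) ^ (α - 1) / Real.Gamma α)
            * ((|μ| ^ n / Real.Gamma ((n:ℝ) * α + 1)) * τ ^ ((n:ℝ) * α)) := by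
        rw [norm_mul, norm_mul, norm_div, norm_pow]
        simp only [Real.norm_eq_abs]
        rw [abs_of_pos hg, abs_neg, gKer, abs_div, abs_of_pos hΓα,
          abs_of_nonneg (Real.rpow_nonneg htτ _), abs_of_nonneg (Real.rpow_nonneg hτ0 _)]
      have e2 : (t ^ (α - 1) / Real.Gamma α) * ((|μ| * t ^ α) ^ n / Real.Gamma ((n:ℝ) * α + 1))
          = (t ^ (α - 1) / Real.Gamma α)
            * ((|μ| ^ n / Real.Gamma ((n:ℝ) * α + 1)) * t ^ ((n:ℝ) * α)) := by
        rw [mul_pow, pow_rpow_eq ht'.le α n]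
        ring
      rw [e1, e2]
      gcongr <;>
        first
          | linarith
          | positivity
          | exact Real.rpow_le_rpow htτ (by linarith) hα1
          | exact Real.rpow_le_rpow hτ0 hτt (by positivity)
    · refine Filter.Eventually.of_forall fun τ _ => ?_
      exact ((summable_E hα (|μ| * t ^ α)).mul_left _)
    · exact intervalIntegrable_const
    · refine Filter.Eventually.of_forall fun τ hτ => ?_
      rw [Set.uIoc_of_le ht'.le] at hτ
      exact (hasSum_repr hα μ hτ.1.le).mul_left _
  have hInt : ∀ n : ℕ, (∫ τ in (0:ℝ)..t,
        gKer α (t - τ) * (((-μ) ^ n / Real.Gamma ((n:ℝ) * α + 1)) * τ ^ ((n:ℝ) * α)))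
      = (-μ) ^ n * t ^ (((n:ℝ) + 1) * α) / Real.Gamma (((n:ℝ) + 1) * α + 1) := by
    intro n
    have hg := (gamma_pos hα n).ne'
    have hfe : (fun τ : ℝ =>
          gKer α (t - τ) * (((-μ) ^ n / Real.Gamma ((n:ℝ) * α + 1)) * τ ^ ((n:ℝ) * α)))
        = fun τ : ℝ => ((-μ) ^ n / Real.Gamma ((n:ℝ) * α + 1))
            * (gKer α (t - τ) * τ ^ ((n:ℝ) * α)) := by
      funext τ; ring
    rw [hfe, intervalIntegral.integral_const_mul, J_formula hα ht' n]
    field_simp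
  simp only [hInt] at hmain
  have hE : HasSum (fun n : ℕ => (-(μ * t ^ α)) ^ n / Real.Gamma ((n:ℝ) * α + 1))
      (mlE α (μ * t ^ α)) := (summable_E hα (-(μ * t ^ α))).hasSum
  have hshift : (fun n : ℕ => (-(μ * t ^ α)) ^ (n + 1) / Real.Gamma (((n + 1 : ℕ):ℝ) * α + 1))
      = fun n : ℕ => -μ * ((-μ) ^ n * t ^ (((n:ℝ) + 1) * α) / Real.Gamma (((n:ℝ) + 1) * α + 1)) := by
    funext n
    rw [show -(μ * t ^ α) = (-μ) * t ^ α by ring, mul_pow, pow_rpow_eq ht'.le α (n + 1)]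
    push_cast
    ring
  have h2 : HasSum (fun n : ℕ => (-(μ * t ^ α)) ^ (n + 1) / Real.Gamma (((n + 1 : ℕ):ℝ) * α + 1))
      (-μ * ∫ τ in (0:ℝ)..t, gKer α (t - τ) * mlE α (μ * τ ^ α)) := by
    rw [hshift]; exact hmain.mul_left (-μ)
  have h3 := (hasSum_nat_add_iff
      (f := fun n : ℕ => (-(μ * t ^ α)) ^ n / Real.Gamma ((n:ℝ) * α + 1)) 1).mp h2
  have h4 : ∑ i ∈ Finset.range 1,
      (-(μ * t ^ α)) ^ i / Real.Gamma ((i:ℝ) * α + 1) = 1 := by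
    simp [Real.Gamma_one]
  rw [h4] at h3
  have h5 := hE.unique h3
  linarith

/-- For `α > 1` the kernel `g_α` is not completely positive on `[0,T]` for any `T > 0`. -/
theorem gKer_not_completelyPositive (α T : ℝ) (hα : 1 < α) (hT : 0 < T) :
    ¬ CompletelyPositiveOn (gKer α) T := by
  intro hCP
  have hα0 : (0:ℝ) < α := by linarith
  have hα1 : (0:ℝ) ≤ α - 1 := by linarith
  have hΓα : 0 < Real.Gamma α := Real.Gamma_pos_of_pos hα0
  -- Step 1 : `mlE α` is nonnegative on `[0, ∞)`
  have hE : ∀ x : ℝ, 0 ≤ x → 0 ≤ mlE α x := by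
    intro x hx
    have hTα : (0:ℝ) < T ^ α := Real.rpow_pos_of_pos hT α
    have hμ : 0 ≤ x / T ^ α := div_nonneg hx hTα.le
    have hint : IntervalIntegrable (fun t => mlE α (x / T ^ α * t ^ α)) volume 0 T := by
      apply ContinuousOn.intervalIntegrable
      rw [Set.uIcc_of_le hT.le]
      exact contOn_mlE_comp hα _ T
    have hpos := (hCP (x / T ^ α) hμ).1 (fun t => mlE α (x / T ^ α * t ^ α)) hint
      (fun t htmem => resolvent_eq hα _ htmem.1) T ⟨hT.le, le_refl T⟩
    have hcanc : x / T ^ α * T ^ α = x := div_mul_cancel₀ x hTα.ne'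
    have hpos' : 0 ≤ mlE α (x / T ^ α * T ^ α) := hpos
    rwa [hcanc] at hpos'
  -- Step 2 : `mlE α (1 * τ^α)` is at least `1/2` near `0`
  have hc0 : ContinuousWithinAt (fun τ : ℝ => mlE α (1 * τ ^ α)) (Set.Icc 0 1) 0 :=
    (contOn_mlE_comp hα 1 1).continuousWithinAt (by norm_num [Set.mem_Icc])
  have h' : Filter.Tendsto (fun τ : ℝ => mlE α (1 * τ ^ α))
      (nhdsWithin 0 (Set.Icc 0 1)) (nhds 1) := by
    simpa [ContinuousWithinAt, Real.zero_rpow hα0.ne', mlE_zero hα] using hc0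
  have hev : ∀ᶠ τ in nhdsWithin 0 (Set.Icc (0:ℝ) 1), 1/2 < mlE α (1 * τ ^ α) :=
    h'.eventually (eventually_gt_nhds (by norm_num))
  obtain ⟨ε, hε, hball⟩ := Metric.mem_nhdsWithin_iff.mp hev
  set δ : ℝ := min (ε/2) 1 with hδdef
  have hδ0 : 0 < δ := lt_min (by linarith) one_pos
  have hδ1 : δ ≤ 1 := min_le_right _ _
  have hδε : δ < ε := lt_of_le_of_lt (min_le_left _ _) (by linarith)
  have hhalf : ∀ τ ∈ Set.Icc (0:ℝ) δ, 1/2 ≤ mlE α (1 * τ ^ α) := by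
    intro τ hτ
    refine le_of_lt (hball ⟨?_, ?_⟩)
    · rw [Metric.mem_ball, Real.dist_eq, sub_zero, abs_of_nonneg hτ.1]
      linarith [hτ.2]
    · exact ⟨hτ.1, le_trans hτ.2 hδ1⟩
  -- Step 3 : derive a contradiction
  set K : ℝ := 4 * Real.Gamma α / δ + 1 with hKdef
  have hK : 0 < K := by positivity
  set Q : ℝ := K ^ (α - 1)⁻¹ with hQdef
  have hQ0 : 0 < Q := Real.rpow_pos_of_pos hK _
  set t : ℝ := δ + Q with htdef
  have hδt : δ ≤ t := by linarith
  have ht0 : (0:ℝ) ≤ t := by linarith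
  have heq := resolvent_eq hα 1 ht0
  have h1tα : (0:ℝ) ≤ 1 * t ^ α := by
    have := Real.rpow_nonneg ht0 α; linarith
  -- continuity /integrability of the integrand on [0, t]
  have hgc : Continuous fun τ : ℝ => gKer α (t - τ) := by
    simp only [gKer]
    exact ((cont_rpow hα1).comp (continuous_const.sub continuous_id)).div_const _
  have hF : ContinuousOn (fun τ : ℝ => gKer α (t - τ) * mlE α (1 * τ ^ α)) (Set.Icc 0 t) :=
    hgc.continuousOn.mul (contOn_mlE_comp hα 1 t)
  have hint1 : IntervalIntegrable (fun τ : ℝ => gKer α (t - τ) * mlE α (1 * τ ^ α)) volume 0 δ := by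
    apply ContinuousOn.intervalIntegrable
    rw [Set.uIcc_of_le hδ0.le]
    exact hF.mono (Set.Icc_subset_Icc le_rfl hδt)
  have hint2 : IntervalIntegrable (fun τ : ℝ => gKer α (t - τ) * mlE α (1 * τ ^ α)) volume δ t := by
    apply ContinuousOn.intervalIntegrable
    rw [Set.uIcc_of_le hδt]
    exact hF.mono (Set.Icc_subset_Icc hδ0.le le_rfl)
  have hsplit := intervalIntegral.integral_add_adjacent_intervals hint1 hint2
  have h2nonneg : 0 ≤ ∫ τ in δ..t, gKer α (t - τ) * mlE α (1 * τ ^ α) := by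
    apply intervalIntegral.integral_nonneg hδt
    intro τ hτ
    have h1 : 0 ≤ gKer α (t - τ) := by
      rw [gKer]
      exact div_nonneg (Real.rpow_nonneg (by linarith [hτ.2]) _) hΓα.le
    have h2 : 0 ≤ mlE α (1 * τ ^ α) := by
      apply hE
      have := Real.rpow_nonneg (le_trans hδ0.le hτ.1) α; linarith
    exact mul_nonneg h1 h2
  have hlow : δ * (gKer α (t - δ) * (1/2))
      ≤ ∫ τ in (0:ℝ)..δ, gKer α (t - τ) * mlE α (1 * τ ^ α) := by
    have hmono := intervalIntegral.integral_mono_on (f := fun _ : ℝ => gKer α (t - δ) * (1/2))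
      hδ0.le intervalIntegrable_const hint1 ?_
    · rw [intervalIntegral.integral_const, smul_eq_mul, sub_zero] at hmono
      exact hmono
    · intro τ hτ
      have htτ : (0:ℝ) ≤ t - δ := by linarith
      have hgg : gKer α (t - δ) ≤ gKer α (t - τ) := by
        rw [gKer, gKer]
        have hbase : (t - δ) ^ (α - 1) ≤ (t - τ) ^ (α - 1) :=
          Real.rpow_le_rpow htτ (by linarith [hτ.2]) hα1
        exact (div_le_div_iff_of_pos_right hΓα).mpr hbase
      have hg0 : 0 ≤ gKer α (t - τ) := by
        rw [gKer]
        exact div_nonneg (Real.rpow_nonneg (by linarith [hτ.2, hδ1]) _) hΓα.le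
      calc gKer α (t - δ) * (1/2) ≤ gKer α (t - τ) * (1/2) := by nlinarith
      _ ≤ gKer α (t - τ) * mlE α (1 * τ ^ α) := by
          have := hhalf τ hτ
          nlinarith
  -- the total integral is at most 1
  have hup : (∫ τ in (0:ℝ)..t, gKer α (t - τ) * mlE α (1 * τ ^ α)) ≤ 1 := by
    have hEt : 0 ≤ mlE α (1 * t ^ α) := hE _ h1tα
    linarith [heq]
  have hfinal : δ * (gKer α (t - δ) * (1/2)) ≤ 1 := by
    calc δ * (gKer α (t - δ) * (1/2))
        ≤ ∫ τ in (0:ℝ)..δ, gKer α (t - τ) * mlE α (1 * τ ^ α) := hlow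
      _ ≤ ∫ τ in (0:ℝ)..t, gKer α (t - τ) * mlE α (1 * τ ^ α) := by
          rw [← hsplit]; linarith
      _ ≤ 1 := hup
  -- but `gKer α (t - δ) = K / Γ α` with `K` large
  have htδ : t - δ = Q := by rw [htdef]; ring
  have hQK : Q ^ (α - 1) = K := by
    rw [hQdef, ← Real.rpow_mul hK.le, inv_mul_cancel₀ (show α - 1 ≠ 0 by linarith),
      Real.rpow_one]
  have hgval : gKer α (t - δ) = K / Real.Gamma α := by
    rw [gKer, htδ, hQK]
  rw [hgval] at hfinal
  have hval : δ * (K / Real.Gamma α * (1/2)) = (4 * Real.Gamma α + δ) / (2 * Real.Gamma α) := by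
    rw [hKdef]; field_simp
  rw [hval] at hfinal
  have h2Γ : 0 < 2 * Real.Gamma α := by positivity
  have h9 : 4 * Real.Gamma α + δ ≤ 2 * Real.Gamma α := by
    calc 4 * Real.Gamma α + δ
        = ((4 * Real.Gamma α + δ) / (2 * Real.Gamma α)) * (2 * Real.Gamma α) := by field_simp
      _ ≤ 1 * (2 * Real.Gamma α) := mul_le_mul_of_nonneg_right hfinal h2Γ.le
      _ = 2 * Real.Gamma α := one_mul _
  linarith
end

section
/- For 0 < α < 2 and ω ≥ 0, there exists a constant C > 0 such that the Mittag-Leffler function satisfies E_α(ω t^α) ≤ C e^{ω^{1/α} t} for all t ≥ 0. -/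
/-- The Mittag-Leffler function `E_α(z) = Σ zⁿ/Γ(αn+1)`. -/
noncomputable def mittagLeffler (α z : ℝ) : ℝ := ∑' n : ℕ, z ^ n / Real.Gamma (α * n + 1)

open Real Set

lemma half_le_Gamma {y : ℝ} (h1 : 1 ≤ y) (h2 : y ≤ 2) : (1/2 : ℝ) ≤ Real.Gamma y := by
  have hy0 : (0:ℝ) < y := by linarith
  have h3 : (0:ℝ) < 3 - y := by linarith
  set l : ℝ := 1 / (3 - y) with hl
  have hl0 : 0 < l := by positivity
  have hlh : 1/2 ≤ l := by
    rw [hl]; rw [le_div_iff₀ h3]; linarith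
  have hl1 : l ≤ 1 := by
    rw [hl, div_le_one h3]; linarith
  have hc := Real.convexOn_log_Gamma.2 (mem_Ioi.2 hy0) (show (3:ℝ) ∈ Ioi 0 by norm_num)
      hl0.le (by linarith : (0:ℝ) ≤ 1 - l) (by ring)
  have hcomb : l * y + (1 - l) * 3 = 2 := by
    have h := one_div_mul_cancel h3.ne'; rw [← hl] at h; linear_combination -h
  have hG3 : Real.Gamma 3 = 2 := by
    rw [show (3:ℝ) = 2 + 1 by norm_num, Real.Gamma_add_one (by norm_num), Real.Gamma_two]
    norm_num
  simp only [smul_eq_mul, Function.comp_apply, hcomb] at hc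
  rw [Real.Gamma_two, Real.log_one, hG3] at hc
  -- hc : 0 ≤ l * log (Gamma y) + (1 - l) * log 2
  have hlog2 : (0:ℝ) ≤ Real.log 2 := Real.log_nonneg one_le_two
  have hL : -Real.log 2 ≤ Real.log (Real.Gamma y) := by
    nlinarith [hc, hlog2, hl0, hlh, hl1]
  have := Real.exp_le_exp.2 hL
  rwa [Real.exp_log (Real.Gamma_pos_of_pos hy0), Real.exp_neg, Real.exp_log two_pos,
    ← one_div] at this

lemma gamma_lb (m : ℕ) {θ : ℝ} (h0 : 0 ≤ θ) (h1 : θ ≤ 1) :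
    (1/2 : ℝ) * m.factorial * ((m : ℝ) + 1) ^ θ ≤ Real.Gamma ((m : ℝ) + 1 + θ) := by
  induction m with
  | zero =>
    simpa [Real.one_rpow] using half_le_Gamma (by linarith : (1:ℝ) ≤ 1 + θ) (by linarith)
  | succ m ih =>
    have hm1 : (0:ℝ) < (m:ℝ) + 1 := by positivity
    have hs : (0:ℝ) < (m:ℝ) + 1 + θ := by linarith
    have hrw : ((m + 1 : ℕ) : ℝ) + 1 + θ = ((m:ℝ) + 1 + θ) + 1 := by push_cast; ring
    rw [hrw, Real.Gamma_add_one hs.ne']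
    -- key Bernoulli-type inequality
    have hgm := Real.geom_mean_le_arith_mean2_weighted (by linarith : (0:ℝ) ≤ 1 - θ) h0
      (zero_le_one) (by positivity : (0:ℝ) ≤ ((m:ℝ)+2)/((m:ℝ)+1)) (by ring)
    rw [Real.one_rpow, one_mul] at hgm
    -- hgm : ((m+2)/(m+1))^θ ≤ (1-θ)*1 + θ*((m+2)/(m+1))
    have hdiv : (((m:ℝ)+2)/((m:ℝ)+1)) ^ θ = ((m:ℝ)+2) ^ θ / ((m:ℝ)+1) ^ θ :=
      Real.div_rpow (by positivity) (by positivity : (0:ℝ) ≤ (m:ℝ)+1) θ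
    have hrp1 : (0:ℝ) < ((m:ℝ)+1) ^ θ := Real.rpow_pos_of_pos hm1 θ
    have key : ((m:ℝ)+1) * ((m:ℝ)+2) ^ θ ≤ ((m:ℝ)+1+θ) * ((m:ℝ)+1) ^ θ := by
      rw [hdiv, div_le_iff₀ hrp1] at hgm
      have h2 : (1-θ)*1 + θ*(((m:ℝ)+2)/((m:ℝ)+1)) = ((m:ℝ)+1+θ)/((m:ℝ)+1) := by
        field_simp; ring
      rw [h2] at hgm
      calc ((m:ℝ)+1) * ((m:ℝ)+2) ^ θ ≤ ((m:ℝ)+1) * (((m:ℝ)+1+θ)/((m:ℝ)+1) * ((m:ℝ)+1)^θ) := by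
            apply mul_le_mul_of_nonneg_left hgm hm1.le
        _ = ((m:ℝ)+1+θ) * ((m:ℝ)+1) ^ θ := by field_simp
    have hfac : ((m+1).factorial : ℝ) = ((m:ℝ)+1) * m.factorial := by
      push_cast [Nat.factorial_succ]; ring
    calc (1/2 : ℝ) * (m+1).factorial * (((m+1:ℕ):ℝ) + 1) ^ θ
        = ((m:ℝ)+1) * ((1/2) * m.factorial) * ((m:ℝ)+2) ^ θ := by
          rw [hfac]; push_cast; ring_nf
      _ ≤ ((m:ℝ)+1+θ) * ((1/2) * m.factorial * ((m:ℝ)+1) ^ θ) := by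
          have : ((m:ℝ)+1) * ((m:ℝ)+2)^θ * ((1/2) * m.factorial) ≤
              ((m:ℝ)+1+θ) * ((m:ℝ)+1)^θ * ((1/2) * m.factorial) := by
            apply mul_le_mul_of_nonneg_right key (by positivity)
          nlinarith [this]
      _ ≤ ((m:ℝ)+1+θ) * Real.Gamma ((m:ℝ)+1+θ) := by
          apply mul_le_mul_of_nonneg_left ih hs.le

lemma pointwise_bound {α x : ℝ} (hα0 : 0 < α) (hx0 : 0 ≤ x) (n : ℕ) :
    (x ^ α) ^ n / Real.Gamma (α * n + 1) ≤
      2 * (x ^ ⌊α * (n:ℝ)⌋₊ / (⌊α * (n:ℝ)⌋₊).factorial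
        + x ^ (⌊α * (n:ℝ)⌋₊ + 1) / (⌊α * (n:ℝ)⌋₊ + 1).factorial) := by
  set mn : ℕ := ⌊α * (n:ℝ)⌋₊ with hmn
  set θ : ℝ := α * n - mn with hθ
  have han : (0:ℝ) ≤ α * n := by positivity
  have hθ0 : 0 ≤ θ := sub_nonneg.2 (Nat.floor_le han)
  have hθ1 : θ ≤ 1 := by
    have := Nat.lt_floor_add_one (α * (n:ℝ))
    rw [hθ]; push_cast at this ⊢; linarith
  have hΓeq : Real.Gamma (α * n + 1) = Real.Gamma ((mn:ℝ) + 1 + θ) := by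
    congr 1; rw [hθ]; ring
  have hΓlb : (1/2 : ℝ) * mn.factorial * ((mn:ℝ) + 1) ^ θ ≤ Real.Gamma (α * n + 1) := by
    rw [hΓeq]; exact gamma_lb mn hθ0 hθ1
  have hfpos : (0:ℝ) < mn.factorial := by positivity
  have hm1pos : (0:ℝ) < (mn:ℝ) + 1 := by positivity
  have hrppos : (0:ℝ) < ((mn:ℝ) + 1) ^ θ := Real.rpow_pos_of_pos hm1pos θ
  have hlbpos : (0:ℝ) < (1/2 : ℝ) * mn.factorial * ((mn:ℝ) + 1) ^ θ := by positivity
  rcases eq_or_lt_of_le hx0 with hx | hx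
  · -- x = 0
    rcases Nat.eq_zero_or_pos n with rfl | hn
    · have hmn0 : mn = 0 := by simp [hmn]
      rw [← hx]
      simp only [Nat.cast_zero, mul_zero, zero_add, Real.Gamma_one, hmn0]
      norm_num
    · rw [← hx]
      rw [Real.zero_rpow hα0.ne', zero_pow hn.ne']
      have : (0:ℝ) / Real.Gamma (α * n + 1) = 0 := zero_div _
      rw [this]
      positivity
  · -- 0 < x
    have hnum : (x ^ α) ^ n = x ^ mn * x ^ θ := by
      rw [← Real.rpow_natCast (x ^ α) n, ← Real.rpow_mul hx0,
        show α * (n:ℝ) = (mn:ℝ) + θ by rw [hθ]; ring,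
        Real.rpow_add hx, Real.rpow_natCast]
    have hb : x ^ θ / ((mn:ℝ) + 1) ^ θ ≤ 1 + x / ((mn:ℝ) + 1) := by
      rw [← Real.div_rpow hx0 hm1pos.le]
      set b : ℝ := x / ((mn:ℝ) + 1) with hbdef
      have hb0 : 0 ≤ b := by positivity
      rcases le_total b 1 with h | h
      · have := Real.rpow_le_one hb0 h hθ0
        linarith
      · calc b ^ θ ≤ b ^ (1:ℝ) := Real.rpow_le_rpow_of_exponent_le h hθ1
          _ = b := Real.rpow_one b
          _ ≤ 1 + b := by linarith
    calc (x ^ α) ^ n / Real.Gamma (α * n + 1)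
        ≤ (x ^ mn * x ^ θ) / ((1/2 : ℝ) * mn.factorial * ((mn:ℝ) + 1) ^ θ) := by
          rw [hnum]; gcongr
      _ = 2 * (x ^ mn / mn.factorial) * (x ^ θ / ((mn:ℝ) + 1) ^ θ) := by
          field_simp
      _ ≤ 2 * (x ^ mn / mn.factorial) * (1 + x / ((mn:ℝ) + 1)) := by
          apply mul_le_mul_of_nonneg_left hb (by positivity)
      _ = 2 * (x ^ mn / mn.factorial + x ^ (mn + 1) / (mn + 1).factorial) := by
          rw [pow_succ, Nat.factorial_succ]
          push_cast
          field_simp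

lemma main_bound {α : ℝ} (hα0 : 0 < α) {x : ℝ} (hx0 : 0 ≤ x) :
    ∑' n : ℕ, (x ^ α) ^ n / Real.Gamma (α * n + 1)
      ≤ (4 * (⌊1/α⌋₊ + 1 : ℕ)) * Real.exp x := by
  set N : ℕ := ⌊1/α⌋₊ + 1 with hN
  have hNpos : 0 < N := Nat.succ_pos _
  set mf : ℕ → ℕ := fun n => ⌊α * (n:ℝ)⌋₊ with hmf
  set c : ℕ → ℕ := fun k => sInf {n | mf n = k} with hc
  have hc_le : ∀ n, c (mf n) ≤ n := fun n => Nat.sInf_le rfl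
  have hfib : ∀ n, n - c (mf n) < N := by
    intro n
    have hmem : c (mf n) ∈ {n' | mf n' = mf n} := Nat.sInf_mem ⟨n, rfl⟩
    have hfl : mf (c (mf n)) = mf n := hmem
    have h1 : (mf n : ℝ) ≤ α * (c (mf n) : ℝ) := by
      conv_lhs => rw [← hfl]
      exact Nat.floor_le (mul_nonneg hα0.le (Nat.cast_nonneg _))
    have h2 : α * (n:ℝ) < (mf n : ℝ) + 1 := by
      have := Nat.lt_floor_add_one (α * (n:ℝ))
      push_cast at this ⊢; exact this
    have hcast : ((n - c (mf n) : ℕ) : ℝ) = (n:ℝ) - (c (mf n) : ℝ) :=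
      Nat.cast_sub (hc_le n)
    have h3 : ((n - c (mf n) : ℕ) : ℝ) < 1 / α := by
      rw [hcast, lt_div_iff₀ hα0, mul_comm]
      nlinarith
    have h4 : n - c (mf n) ≤ ⌊1/α⌋₊ := Nat.le_floor h3.le
    omega
  set i : ℕ → ℕ × Fin N := fun n => (mf n, ⟨n - c (mf n), hfib n⟩) with hi
  have hinj : Function.Injective i := by
    intro a b hab
    have h1 : mf a = mf b := congrArg Prod.fst hab
    have h2 : a - c (mf a) = b - c (mf b) :=
      congrArg (fun p : ℕ × Fin N => (p.2 : ℕ)) hab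
    have h3 := hc_le a
    have h4 := hc_le b
    rw [h1] at h2 h3
    omega
  set g0 : ℕ → ℝ := fun k => 2 * (x ^ k / k.factorial + x ^ (k+1) / (k+1).factorial) with hg0
  have hs1 : Summable (fun k : ℕ => x ^ k / (k.factorial : ℝ)) := Real.summable_pow_div_factorial x
  have hs2 : Summable (fun k : ℕ => x ^ (k+1) / ((k+1).factorial : ℝ)) :=
    hs1.comp_injective (add_left_injective 1)
  have hg0sum : Summable g0 := (hs1.add hs2).mul_left 2
  set g : ℕ × Fin N → ℝ := fun p => g0 p.1 with hg
  have hgnn : ∀ p, 0 ≤ g p := by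
    intro p; rw [hg, hg0]; positivity
  have hgsum : Summable g := by
    rw [hg]
    apply (summable_prod_of_nonneg (fun p => hgnn p)).2
    constructor
    · intro k; exact Summable.of_finite
    · apply Summable.congr (hg0sum.mul_left (N:ℝ))
      intro k
      rw [tsum_fintype]
      simp only [hg]
      rw [Finset.sum_const, Finset.card_univ, Fintype.card_fin, nsmul_eq_mul]
  have hpt : ∀ n : ℕ, (x ^ α) ^ n / Real.Gamma (α * n + 1) ≤ g (i n) := fun n =>
    pointwise_bound hα0 hx0 n
  have hhnn : ∀ n : ℕ, 0 ≤ (x ^ α) ^ n / Real.Gamma (α * n + 1) := by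
    intro n
    have h1 : 0 < Real.Gamma (α * n + 1) := Real.Gamma_pos_of_pos (by positivity)
    have h2 : (0:ℝ) ≤ (x ^ α) ^ n := pow_nonneg (Real.rpow_nonneg hx0 α) n
    positivity
  have hhsum : Summable (fun n : ℕ => (x ^ α) ^ n / Real.Gamma (α * n + 1)) :=
    Summable.of_nonneg_of_le hhnn hpt (hgsum.comp_injective hinj)
  have step1 : ∑' n : ℕ, (x ^ α) ^ n / Real.Gamma (α * n + 1) ≤ ∑' p, g p :=
    Summable.tsum_le_tsum_of_inj i hinj (fun p _ => hgnn p) hpt hhsum hgsum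
  have hexp : Real.exp x = ∑' k : ℕ, x ^ k / (k.factorial : ℝ) := by
    rw [Real.exp_eq_exp_ℝ, NormedSpace.exp_eq_tsum_div]
  have hs2le : ∑' k : ℕ, x ^ (k+1) / ((k+1).factorial : ℝ) ≤ Real.exp x := by
    rw [hexp]
    exact Summable.tsum_le_tsum_of_inj (fun k => k + 1) (add_left_injective 1)
      (fun c _ => by positivity) (fun k => le_refl _) hs2 hs1
  have hgval : ∑' p, g p = (N:ℝ) * ∑' k, g0 k := by
    rw [Summable.tsum_prod' hgsum (fun b => Summable.of_finite)]
    have : ∀ k : ℕ, ∑' j : Fin N, g (k, j) = (N:ℝ) * g0 k := by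
      intro k
      rw [tsum_fintype]
      simp only [hg]
      rw [Finset.sum_const, Finset.card_univ, Fintype.card_fin, nsmul_eq_mul]
    rw [tsum_congr this, tsum_mul_left]
  have hg0val : ∑' k, g0 k ≤ 4 * Real.exp x := by
    rw [hg0]
    rw [tsum_mul_left, Summable.tsum_add hs1 hs2, ← hexp]
    nlinarith [hs2le, Real.exp_pos x]
  calc ∑' n : ℕ, (x ^ α) ^ n / Real.Gamma (α * n + 1) ≤ ∑' p, g p := step1
    _ = (N:ℝ) * ∑' k, g0 k := hgval
    _ ≤ (N:ℝ) * (4 * Real.exp x) := by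
        apply mul_le_mul_of_nonneg_left hg0val (by positivity)
    _ = (4 * (⌊1/α⌋₊ + 1 : ℕ)) * Real.exp x := by rw [hN]; push_cast; ring

/-- For `0 < α < 2` and `ω ≥ 0` there is `C > 0` with `E_α(ω tᵅ) ≤ C e^{ω^{1/α} t}`
for all `t ≥ 0`. -/
theorem mittagLeffler_exp_bound (α ω : ℝ) (hα : α ∈ Set.Ioo (0:ℝ) 2) (hω : 0 ≤ ω) :
    ∃ C : ℝ, 0 < C ∧ ∀ t : ℝ, 0 ≤ t →
      mittagLeffler α (ω * t ^ α) ≤ C * Real.exp (ω ^ (1/α) * t) := by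
  obtain ⟨hα0, -⟩ := hα
  refine ⟨4 * (⌊1/α⌋₊ + 1 : ℕ), by positivity, ?_⟩
  intro t ht
  have hx0 : 0 ≤ ω ^ (1/α) * t := mul_nonneg (Real.rpow_nonneg hω _) ht
  have hz : ω * t ^ α = (ω ^ (1/α) * t) ^ α := by
    rw [Real.mul_rpow (Real.rpow_nonneg hω _) ht, ← Real.rpow_mul hω,
      one_div_mul_cancel hα0.ne', Real.rpow_one]
  rw [mittagLeffler, hz]
  exact main_bound hα0 hx0
end

section
/- If A is a bounded linear operator on a Banach space and a(t) = t^(α-1)/Γ(α) with α > 0, then the series S_α(t) = Σ_{n=0}^∞ A^n t^(αn)/Γ(αn + 1) converges in operator norm for each t ≥ 0 and defines an α-times resolvent family for A: it is strongly (indeed norm) continuous, S_α(0) = I, commutes with A, and satisfies S_α(t)x = x + ∫₀ᵗ g_α(t-τ) A S_α(τ)x dτ for all x. -/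
open MeasureTheory intervalIntegral

section Aux


lemma gamma_lower {s K : ℝ} (hs : 1 ≤ s) (hK : 1 ≤ K) :
    Real.exp (-(K + 1)) * K ^ (s - 1) ≤ Real.Gamma s := by
  have hs0 : (0:ℝ) < s := lt_of_lt_of_le one_pos hs
  have hK0 : (0:ℝ) < K := lt_of_lt_of_le one_pos hK
  rw [Real.Gamma_eq_integral hs0]
  have hint : IntegrableOn (fun x : ℝ => Real.exp (-x) * x ^ (s - 1)) (Set.Ioi 0) :=
    Real.GammaIntegral_convergent hs0
  have h1 : ∫ x in Set.Ioc K (K + 1), Real.exp (-x) * x ^ (s - 1)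
      ≤ ∫ x in Set.Ioi 0, Real.exp (-x) * x ^ (s - 1) := by
    refine setIntegral_mono_set hint ?_ ?_
    · filter_upwards [self_mem_ae_restrict measurableSet_Ioi] with x hx
      have : (0:ℝ) < x := hx
      positivity
    · filter_upwards with x hx
      exact lt_of_lt_of_le hK0 hx.1.le
  refine le_trans ?_ h1
  have h2 : Real.exp (-(K + 1)) * K ^ (s - 1)
      = ∫ _x in Set.Ioc K (K + 1), Real.exp (-(K + 1)) * K ^ (s - 1) := by
    rw [setIntegral_const]
    rw [Real.volume_real_Ioc]
    norm_num
  rw [h2]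
  refine setIntegral_mono_on ?_ (hint.mono_set ?_) measurableSet_Ioc ?_
  · exact integrableOn_const (by rw [Real.volume_Ioc]; exact ENNReal.ofReal_ne_top)
  · intro x hx; exact lt_of_lt_of_le hK0 hx.1.le
  · intro x hx
    have hx1 : K ≤ x := hx.1.le
    have hx2 : x ≤ K + 1 := hx.2
    have e1 : Real.exp (-(K + 1)) ≤ Real.exp (-x) := Real.exp_le_exp.2 (by linarith)
    have e2 : K ^ (s - 1) ≤ x ^ (s - 1) :=
      Real.rpow_le_rpow hK0.le hx1 (by linarith)
    exact mul_le_mul e1 e2 (Real.rpow_nonneg hK0.le _) (Real.exp_pos _).le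

lemma summable_ml {α : ℝ} (hα : 0 < α) {c : ℝ} (hc : 0 ≤ c) :
    Summable fun n : ℕ => c ^ n / Real.Gamma (α * n + 1) := by
  set K : ℝ := max 1 ((2 * c + 1) ^ α⁻¹) with hKdef
  have hK1 : (1:ℝ) ≤ K := le_max_left _ _
  have hK0 : (0:ℝ) < K := lt_of_lt_of_le one_pos hK1
  have hKα : 2 * c + 1 ≤ K ^ α := by
    have : ((2 * c + 1) ^ α⁻¹) ^ α ≤ K ^ α :=
      Real.rpow_le_rpow (Real.rpow_nonneg (by linarith) _) (le_max_right _ _) hα.le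
    rwa [← Real.rpow_mul (by linarith : (0:ℝ) ≤ 2 * c + 1), inv_mul_cancel₀ hα.ne',
      Real.rpow_one] at this
  have hr0 : (0:ℝ) ≤ c / K ^ α := div_nonneg hc (Real.rpow_nonneg hK0.le _)
  have hr1 : c / K ^ α < 1 := by
    rw [div_lt_one (lt_of_lt_of_le (by linarith) hKα)]
    linarith
  refine Summable.of_nonneg_of_le (fun n => ?_) (fun n => ?_)
    (((summable_geometric_of_lt_one hr0 hr1).mul_left (Real.exp (K + 1))))
  · have := Real.Gamma_pos_of_pos (show (0:ℝ) < α * n + 1 by positivity)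
    positivity
  · have hG : Real.exp (-(K + 1)) * K ^ (α * n) ≤ Real.Gamma (α * n + 1) := by
      have := gamma_lower (s := α * n + 1) (K := K)
        (by nlinarith [mul_nonneg hα.le (Nat.cast_nonneg n)]) hK1
      simpa using this
    have hpos : (0:ℝ) < Real.exp (-(K + 1)) * K ^ (α * n) := by positivity
    have h1 : c ^ n / Real.Gamma (α * n + 1) ≤ c ^ n / (Real.exp (-(K + 1)) * K ^ (α * n)) :=
      div_le_div_of_nonneg_left (pow_nonneg hc n) hpos hG
    refine h1.trans (le_of_eq ?_)
    rw [Real.exp_neg, div_eq_mul_inv, mul_inv, inv_inv, div_pow, Real.rpow_mul hK0.le,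
      Real.rpow_natCast]
    ring

lemma beta_integrable {a b t : ℝ} (ha : 0 < a) (hb : 0 < b) (ht : 0 < t) :
    IntervalIntegrable (fun τ => (t - τ) ^ (a - 1) * τ ^ (b - 1)) volume 0 t := by
  have half : ∀ u v : ℝ, 0 < u → 0 < v →
      IntervalIntegrable (fun τ => (t - τ) ^ (u - 1) * τ ^ (v - 1)) volume 0 (t / 2) := by
    intro u v hu hv
    have hf : IntervalIntegrable (fun τ : ℝ => τ ^ (v - 1)) volume 0 (t / 2) :=
      intervalIntegrable_rpow' (by linarith)
    have hg : ContinuousOn (fun τ : ℝ => (t - τ) ^ (u - 1)) (Set.uIcc 0 (t / 2)) := by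
      refine ContinuousOn.rpow_const ((continuous_const.sub continuous_id).continuousOn) ?_
      intro τ hτ
      rw [Set.uIcc_of_le (by linarith : (0:ℝ) ≤ t / 2)] at hτ
      exact Or.inl (by have := hτ.2; intro h0; nlinarith [sub_eq_zero.1 h0])
    exact hf.continuousOn_mul hg
  refine (half a b ha hb).trans ?_
  have h2 : IntervalIntegrable (fun τ => (t - τ) ^ (b - 1) * τ ^ (a - 1)) volume 0 (t / 2) :=
    half b a hb ha
  have h3 := h2.comp_sub_left t
  have e1 : t - t / 2 = t / 2 := by ring
  have e2 : t - 0 = t := by ring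
  rw [e1, e2] at h3
  refine h3.symm.congr ?_
  intro τ _
  simp only [sub_sub_cancel]
  exact mul_comm _ _

lemma beta_value {a b t : ℝ} (ha : 0 < a) (hb : 0 < b) (ht : 0 < t) :
    ∫ τ in (0:ℝ)..t, (t - τ) ^ (a - 1) * τ ^ (b - 1) =
      Real.Gamma a * Real.Gamma b / Real.Gamma (a + b) * t ^ (a + b - 1) := by
  have key := Complex.betaIntegral_scaled (b : ℂ) (a : ℂ) ht
  have h1 : (∫ x in (0:ℝ)..t, (x : ℂ) ^ ((b : ℂ) - 1) * ((t : ℂ) - x) ^ ((a : ℂ) - 1)) =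
      ((∫ τ in (0:ℝ)..t, (t - τ) ^ (a - 1) * τ ^ (b - 1) : ℝ) : ℂ) := by
    rw [← intervalIntegral.integral_ofReal]
    rw [intervalIntegral.integral_of_le ht.le, intervalIntegral.integral_of_le ht.le]
    refine setIntegral_congr_fun measurableSet_Ioc fun x hx => ?_
    have hx0 : (0:ℝ) ≤ x := hx.1.le
    have hxt : (0:ℝ) ≤ t - x := by linarith [hx.2]
    have c1 : ((b : ℂ) - 1) = ((b - 1 : ℝ) : ℂ) := by push_cast; ring
    have c2 : ((a : ℂ) - 1) = ((a - 1 : ℝ) : ℂ) := by push_cast; ring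
    have c3 : ((t : ℂ) - (x : ℂ)) = ((t - x : ℝ) : ℂ) := by push_cast; ring
    rw [c1, c2, c3, ← Complex.ofReal_cpow hx0, ← Complex.ofReal_cpow hxt,
      ← Complex.ofReal_mul]
    push_cast
    ring
  have hGab : Complex.Gamma ((b : ℂ) + (a : ℂ)) ≠ 0 :=
    Complex.Gamma_ne_zero_of_re_pos (by simp; positivity)
  have hbeta : Complex.betaIntegral (b : ℂ) (a : ℂ) =
      Complex.Gamma b * Complex.Gamma a / Complex.Gamma ((b : ℂ) + (a : ℂ)) := by
    rw [eq_div_iff hGab]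
    rw [Complex.Gamma_mul_Gamma_eq_betaIntegral (by simp [hb]) (by simp [ha])]
    ring
  rw [h1, hbeta] at key
  have c4 : ((t : ℂ) ^ ((b : ℂ) + (a : ℂ) - 1)) = ((t ^ (a + b - 1) : ℝ) : ℂ) := by
    rw [show ((b : ℂ) + (a : ℂ) - 1) = ((a + b - 1 : ℝ) : ℂ) by push_cast; ring]
    exact (Complex.ofReal_cpow ht.le _).symm
  rw [c4, Complex.Gamma_ofReal, Complex.Gamma_ofReal,
    show ((b : ℂ) + (a : ℂ)) = ((a + b : ℝ) : ℂ) by push_cast; ring,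
    Complex.Gamma_ofReal] at key
  have := key
  rw [← Complex.ofReal_mul, ← Complex.ofReal_div, ← Complex.ofReal_mul] at this
  have h2 := Complex.ofReal_injective this
  rw [h2]; ring

end Aux

/-- The operator-valued Mittag-Leffler family `S_α(t) = Σ Aⁿ t^{αn}/Γ(αn+1)` for a
bounded operator `A`. -/
noncomputable def opML {B : Type*} [NormedAddCommGroup B] [NormedSpace ℝ B]
    [CompleteSpace B] (A : B →L[ℝ] B) (α t : ℝ) : B →L[ℝ] B :=
  ∑' n : ℕ, (t ^ (α * n) / Real.Gamma (α * n + 1)) • A ^ n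

/-- For a bounded operator `A` and `α > 0`, the series `Σ Aⁿ t^{αn}/Γ(αn+1)` converges in
operator norm for each `t ≥ 0` and defines an `α`-times resolvent family for `A`: it is
norm continuous, equals `I` at `t = 0`, commutes with `A`, and satisfies the resolvent
equation with kernel `g_α(t) = t^{α-1}/Γ(α)`. -/
theorem opML_is_alpha_resolvent
    {B : Type*} [NormedAddCommGroup B] [NormedSpace ℝ B] [CompleteSpace B]
    (A : B →L[ℝ] B) (α : ℝ) (hα : 0 < α) :
    (∀ t : ℝ, 0 ≤ t →
        Summable fun n : ℕ => ‖(t ^ (α * n) / Real.Gamma (α * n + 1)) • A ^ n‖) ∧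
      ContinuousOn (fun t => opML A α t) (Set.Ici 0) ∧
      opML A α 0 = 1 ∧
      (∀ t : ℝ, 0 ≤ t → A.comp (opML A α t) = (opML A α t).comp A) ∧
      (∀ t : ℝ, 0 ≤ t → ∀ x : B,
        opML A α t x = x + ∫ τ in (0:ℝ)..t,
          ((t - τ) ^ (α - 1) / Real.Gamma α) • A (opML A α τ x)) := by
  
  have hApow : ∀ n : ℕ, ‖A ^ n‖ ≤ ‖A‖ ^ n := by
    intro n
    induction n with
    | zero => rw [pow_zero, pow_zero]; exact ContinuousLinearMap.norm_id_le
    | succ n ih =>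
        calc ‖A ^ (n + 1)‖ = ‖A ^ n * A‖ := by rw [pow_succ]
          _ ≤ ‖A ^ n‖ * ‖A‖ := norm_mul_le _ _
          _ ≤ ‖A‖ ^ n * ‖A‖ := by
              exact mul_le_mul_of_nonneg_right ih (norm_nonneg _)
          _ = ‖A‖ ^ (n + 1) := by rw [pow_succ]
  have hGpos : ∀ n : ℕ, (0:ℝ) < Real.Gamma (α * n + 1) := fun n =>
    Real.Gamma_pos_of_pos (by positivity)
  have hcoef : ∀ t : ℝ, 0 ≤ t → ∀ n : ℕ,
      (0:ℝ) ≤ t ^ (α * n) / Real.Gamma (α * n + 1) := by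
    intro t ht n
    exact div_nonneg (Real.rpow_nonneg ht _) (hGpos n).le
  have hrpow : ∀ t : ℝ, 0 ≤ t → ∀ n : ℕ, t ^ (α * n) = (t ^ α) ^ n := by
    intro t ht n
    rw [Real.rpow_mul ht, Real.rpow_natCast]
  -- Part 1
  have part1 : ∀ t : ℝ, 0 ≤ t →
      Summable fun n : ℕ => ‖(t ^ (α * n) / Real.Gamma (α * n + 1)) • A ^ n‖ := by
    intro t ht
    refine Summable.of_nonneg_of_le (fun n => norm_nonneg _) (fun n => ?_)
      (summable_ml hα (mul_nonneg (Real.rpow_nonneg ht α) (norm_nonneg A)))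
    rw [norm_smul (t ^ (α * n) / Real.Gamma (α * n + 1)) (A ^ n), Real.norm_eq_abs, abs_of_nonneg (hcoef t ht n)]
    calc t ^ (α * n) / Real.Gamma (α * n + 1) * ‖A ^ n‖
        ≤ t ^ (α * n) / Real.Gamma (α * n + 1) * ‖A‖ ^ n :=
          mul_le_mul_of_nonneg_left (hApow n) (hcoef t ht n)
      _ = (t ^ α * ‖A‖) ^ n / Real.Gamma (α * n + 1) := by
          rw [hrpow t ht n, mul_pow]; ring
  have hop : ∀ t : ℝ, 0 ≤ t →
      Summable fun n : ℕ => (t ^ (α * n) / Real.Gamma (α * n + 1)) • A ^ n :=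
    fun t ht => Summable.of_norm (part1 t ht)
  have hopHasSum : ∀ t : ℝ, 0 ≤ t →
      HasSum (fun n : ℕ => (t ^ (α * n) / Real.Gamma (α * n + 1)) • A ^ n) (opML A α t) :=
    fun t ht => (hop t ht).hasSum
  -- Part 3
  have part3 : opML A α 0 = 1 := by
    rw [opML]
    rw [tsum_eq_single 0 ?_]
    · norm_num [Real.Gamma_one]
    · intro n hn
      have hne : α * (n:ℝ) ≠ 0 := by
        have : (0:ℝ) < n := by exact_mod_cast Nat.pos_of_ne_zero hn
        positivity
      rw [Real.zero_rpow hne, zero_div, zero_smul]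
  -- Part 4
  have part4 : ∀ t : ℝ, 0 ≤ t → A.comp (opML A α t) = (opML A α t).comp A := by
    intro t ht
    rw [← ContinuousLinearMap.mul_def, ← ContinuousLinearMap.mul_def, opML]
    rw [← (hop t ht).tsum_mul_left A, ← (hop t ht).tsum_mul_right A]
    refine tsum_congr fun n => ?_
    rw [ContinuousLinearMap.mul_def, ContinuousLinearMap.mul_def, ContinuousLinearMap.comp_smulₛₗ,
      ContinuousLinearMap.smul_comp, ← ContinuousLinearMap.mul_def, ← ContinuousLinearMap.mul_def,
      ← pow_succ', ← pow_succ]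
    simp
  -- Part 2
  have part2 : ContinuousOn (fun t => opML A α t) (Set.Ici 0) := by
    have hIcc : ∀ T : ℝ, 0 ≤ T → ContinuousOn (fun t => opML A α t) (Set.Icc 0 T) := by
      intro T hT
      simp only [opML]
      refine continuousOn_tsum (fun n => ?_)
        (summable_ml hα (mul_nonneg (Real.rpow_nonneg hT α) (norm_nonneg A))) (fun n t htmem => ?_)
      · exact ((Real.continuous_rpow_const (by positivity)).div_const _).smul
          continuous_const |>.continuousOn
      · rw [norm_smul (t ^ (α * n) / Real.Gamma (α * n + 1)) (A ^ n), Real.norm_eq_abs,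
          abs_of_nonneg (hcoef t htmem.1 n)]
        calc t ^ (α * n) / Real.Gamma (α * n + 1) * ‖A ^ n‖
            ≤ T ^ (α * n) / Real.Gamma (α * n + 1) * ‖A‖ ^ n := by
              refine mul_le_mul ?_ (hApow n) (norm_nonneg _) (hcoef T hT n)
              have hTt : t ^ (α * n) ≤ T ^ (α * n) :=
                Real.rpow_le_rpow htmem.1 htmem.2 (by positivity)
              have hG := hGpos n
              gcongr
          _ = (T ^ α * ‖A‖) ^ n / Real.Gamma (α * n + 1) := by
              rw [hrpow T hT n, mul_pow]; ring
    intro t ht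
    have ht' : (0:ℝ) ≤ t := ht
    have h1 : ContinuousWithinAt (fun t => opML A α t) (Set.Icc 0 (t + 1)) t :=
      (hIcc (t + 1) (by linarith)).continuousWithinAt ⟨ht', by linarith⟩
    refine h1.mono_of_mem_nhdsWithin ?_
    rw [← Set.Ici_inter_Iic]
    exact Filter.inter_mem self_mem_nhdsWithin
      (mem_nhdsWithin_of_mem_nhds (Iic_mem_nhds (lt_add_one t)))
  -- Part 5
  have part5 : ∀ t : ℝ, 0 ≤ t → ∀ x : B,
      opML A α t x = x + ∫ τ in (0:ℝ)..t,
        ((t - τ) ^ (α - 1) / Real.Gamma α) • A (opML A α τ x) := by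
    intro t ht x
    rcases eq_or_lt_of_le ht with h0 | h0t
    · rw [← h0, intervalIntegral.integral_same, add_zero, part3,
        ContinuousLinearMap.one_apply]
    have hGα := Real.Gamma_pos_of_pos hα
    have hvec : ∀ τ : ℝ, 0 ≤ τ →
        HasSum (fun n : ℕ => (τ ^ (α * n) / Real.Gamma (α * n + 1)) • (A ^ n) x)
          (opML A α τ x) := by
      intro τ hτ
      have h := (hopHasSum τ hτ).mapL (ContinuousLinearMap.apply ℝ B x)
      simpa using h
    have hAvec : ∀ τ : ℝ, 0 ≤ τ →
        HasSum (fun n : ℕ => (τ ^ (α * n) / Real.Gamma (α * n + 1)) • A ((A ^ n) x))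
          (A (opML A α τ x)) := by
      intro τ hτ
      have h := (hvec τ hτ).mapL A
      simpa using h
    set F : ℕ → ℝ → B := fun n τ =>
      (((t - τ) ^ (α - 1) * τ ^ (α * n)) / (Real.Gamma α * Real.Gamma (α * n + 1))) •
        ((A ^ (n + 1)) x) with hF
    have hpointwise : ∀ τ ∈ Set.Ioc (0:ℝ) t,
        ((t - τ) ^ (α - 1) / Real.Gamma α) • A (opML A α τ x) = ∑' n, F n τ := by
      intro τ hτ
      have h := ((hAvec τ hτ.1.le).const_smul ((t - τ) ^ (α - 1) / Real.Gamma α)).tsum_eq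
      rw [← h]
      refine tsum_congr fun n => ?_
      simp only [hF]
      rw [smul_smul, div_mul_div_comm, ← ContinuousLinearMap.mul_apply, ← pow_succ']
    have hbpos : ∀ n : ℕ, (0:ℝ) < α * n + 1 := fun n => by positivity
    have hbeta_int : ∀ n : ℕ, IntegrableOn
        (fun τ => (t - τ) ^ (α - 1) * τ ^ (α * n)) (Set.Ioc 0 t) volume := by
      intro n
      have h := (beta_integrable hα (hbpos n) h0t).1
      simpa [add_sub_cancel_right] using h
    have hFint : ∀ n : ℕ, IntegrableOn (F n) (Set.Ioc 0 t) volume := fun n =>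
      ((hbeta_int n).div_const _).smul_const _
    have hval : ∀ n : ℕ, (∫ τ in Set.Ioc (0:ℝ) t, (t - τ) ^ (α - 1) * τ ^ (α * n))
        = Real.Gamma α * Real.Gamma (α * n + 1) / Real.Gamma (α * ((n:ℝ) + 1) + 1)
          * t ^ (α * ((n:ℝ) + 1)) := by
      intro n
      have h := beta_value hα (hbpos n) h0t
      rw [intervalIntegral.integral_of_le ht] at h
      have e1 : α + (α * (n:ℝ) + 1) = α * ((n:ℝ) + 1) + 1 := by ring
      rw [e1, add_sub_cancel_right, add_sub_cancel_right] at h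
      exact h
    have hGc : ∀ n : ℕ, (0:ℝ) < Real.Gamma (α * ((n:ℝ) + 1) + 1) := by
      intro n
      refine Real.Gamma_pos_of_pos ?_
      have : (0:ℝ) ≤ (n:ℝ) := Nat.cast_nonneg n
      nlinarith
    have hFval : ∀ n : ℕ, (∫ τ in Set.Ioc (0:ℝ) t, F n τ)
        = (t ^ (α * ((n:ℝ) + 1)) / Real.Gamma (α * ((n:ℝ) + 1) + 1)) • ((A ^ (n + 1)) x) := by
      intro n
      simp only [hF]
      rw [_root_.integral_smul_const, MeasureTheory.integral_div, hval n]
      congr 1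
      field_simp
    have hnormval : ∀ n : ℕ, (∫ τ in Set.Ioc (0:ℝ) t, ‖F n τ‖)
        = t ^ (α * ((n:ℝ) + 1)) / Real.Gamma (α * ((n:ℝ) + 1) + 1) * ‖(A ^ (n + 1)) x‖ := by
      intro n
      have hcong : ∀ τ ∈ Set.Ioc (0:ℝ) t, ‖F n τ‖ =
          ((t - τ) ^ (α - 1) * τ ^ (α * n)) / (Real.Gamma α * Real.Gamma (α * n + 1)) *
            ‖(A ^ (n + 1)) x‖ := by
        intro τ hτ
        simp only [hF]
        rw [norm_smul, Real.norm_eq_abs, abs_of_nonneg]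
        exact div_nonneg (mul_nonneg (Real.rpow_nonneg (by linarith [hτ.2]) _)
          (Real.rpow_nonneg hτ.1.le _)) (mul_nonneg hGα.le (hGpos n).le)
      rw [setIntegral_congr_fun measurableSet_Ioc hcong, MeasureTheory.integral_mul_const,
        MeasureTheory.integral_div, hval n]
      congr 1
      field_simp
    have hsum : Summable fun n : ℕ => ∫ τ in Set.Ioc (0:ℝ) t, ‖F n τ‖ := by
      have hd : (0:ℝ) ≤ t ^ α * ‖A‖ := mul_nonneg (Real.rpow_nonneg ht α) (norm_nonneg A)
      have hbase : Summable fun n : ℕ =>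
          (t ^ α * ‖A‖) ^ n / Real.Gamma (α * n + 1) * ‖x‖ :=
        (summable_ml hα hd).mul_right ‖x‖
      have hshift : Summable fun n : ℕ =>
          (t ^ α * ‖A‖) ^ (n + 1) / Real.Gamma (α * ((n:ℝ) + 1) + 1) * ‖x‖ := by
        have h2 := (summable_nat_add_iff 1).2 hbase
        refine h2.congr fun n => ?_
        push_cast
        ring_nf
      refine Summable.of_nonneg_of_le (fun n => ?_) (fun n => ?_) hshift
      · exact integral_nonneg fun τ => norm_nonneg _
      · rw [hnormval n]
        have h1 : ‖(A ^ (n + 1)) x‖ ≤ ‖A‖ ^ (n + 1) * ‖x‖ :=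
          le_trans ((A ^ (n + 1)).le_opNorm x)
            (mul_le_mul_of_nonneg_right (hApow (n + 1)) (norm_nonneg x))
        have h2 : t ^ (α * ((n:ℝ) + 1)) = (t ^ α) ^ (n + 1) := by
          have := hrpow t ht (n + 1)
          push_cast at this
          exact this
        rw [h2, mul_pow]
        calc (t ^ α) ^ (n + 1) / Real.Gamma (α * ((n:ℝ) + 1) + 1) * ‖(A ^ (n + 1)) x‖
            ≤ (t ^ α) ^ (n + 1) / Real.Gamma (α * ((n:ℝ) + 1) + 1) * (‖A‖ ^ (n + 1) * ‖x‖) := by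
              refine mul_le_mul_of_nonneg_left h1 ?_
              exact div_nonneg (pow_nonneg (Real.rpow_nonneg ht α) _) (hGc n).le
          _ = (t ^ α) ^ (n + 1) * ‖A‖ ^ (n + 1) / Real.Gamma (α * ((n:ℝ) + 1) + 1) * ‖x‖ := by
              ring
    rw [intervalIntegral.integral_of_le ht,
      setIntegral_congr_fun measurableSet_Ioc hpointwise,
      ← integral_tsum_of_summable_integral_norm hFint hsum,
      tsum_congr hFval, ← (hvec t ht).tsum_eq,
      Summable.tsum_eq_zero_add (hvec t ht).summable]
    congr 1
    · norm_num [Real.Gamma_one]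
    · refine tsum_congr fun n => ?_
      push_cast
      ring_nf
  exact ⟨part1, part2, part3, part4, part5⟩
end
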